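/- With K = diag(k_0,...,k_d) as above (all k_i nonzero), the map † : Mat_{d+1}(F) → Mat_{d+1}(F), X ↦ K^{-1} X^t K, is an antiautomorphism of the F-algebra Mat_{d+1}(F) satisfying (X†)† = X for all X, and † is the unique antiautomorphism of Mat_{d+1}(F) fixing A and each of the diagonal idempotents E*_0,...,E*_d (where E*_i has (i,i)-entry 1 and all others 0). -/

import Mathlib

section Aux

variable {F : Type*} [Field F] {d : ℕ}

private lemma aux_kstep (A : Matrix (Fin (d + 1)) (Fin (d + 1)) F)
    (hirr : ∀ i j : Fin (d + 1), ((i : ℤ) - (j : ℤ)).natAbs = 1 → A i j ≠ 0)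
    (k : Fin (d + 1) → F)
    (hk : ∀ i : Fin (d + 1), k i =
      (∏ j ∈ Finset.univ.filter (fun j : Fin d => (j : ℕ) < (i : ℕ)), A j.castSucc j.succ) /
      (∏ j ∈ Finset.univ.filter (fun j : Fin d => (j : ℕ) < (i : ℕ)), A j.succ j.castSucc)) :
    ∀ i : Fin d, k i.succ * A i.succ i.castSucc = k i.castSucc * A i.castSucc i.succ := by
  intro i
  have hsub : ∀ j : Fin d, A j.succ j.castSucc ≠ 0 := by
    intro j
    apply hirr
    simp [Fin.val_succ, Fin.coe_castSucc]
  have hset : (Finset.univ.filter (fun j : Fin d => (j : ℕ) < ((i.succ : Fin (d+1)) : ℕ)))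
      = insert i (Finset.univ.filter (fun j : Fin d => (j : ℕ) < ((i.castSucc : Fin (d+1)) : ℕ))) := by
    ext j
    simp only [Finset.mem_filter, Finset.mem_univ, true_and, Finset.mem_insert,
      Fin.val_succ, Fin.coe_castSucc]
    constructor
    · intro h
      rcases Nat.lt_succ_iff_lt_or_eq.mp h with h | h
      · exact Or.inr h
      · exact Or.inl (Fin.ext h)
    · rintro (rfl | h) <;> omega
  have hnotmem : i ∉ Finset.univ.filter (fun j : Fin d => (j : ℕ) < ((i.castSucc : Fin (d+1)) : ℕ)) := by
    simp
  have hQ : (∏ j ∈ Finset.univ.filter (fun j : Fin d => (j : ℕ) < ((i.castSucc : Fin (d+1)) : ℕ)), A j.succ j.castSucc) ≠ 0 :=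
    Finset.prod_ne_zero_iff.mpr (fun j _ => hsub j)
  rw [hk i.succ, hk i.castSucc, hset, Finset.prod_insert hnotmem, Finset.prod_insert hnotmem]
  field_simp
  rw [mul_div_cancel_right₀ _ (hsub i)]

private lemma aux_sandwich (X : Matrix (Fin (d+1)) (Fin (d+1)) F) (i j : Fin (d+1)) :
    Matrix.single i i (1:F) * X * Matrix.single j j 1
      = X i j • Matrix.single i j 1 := by
  ext a b
  rw [Matrix.mul_assoc]
  by_cases ha : a = i
  · subst ha
    rw [Matrix.single_mul_apply_same]
    by_cases hb : b = j
    · subst hb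
      rw [Matrix.mul_single_apply_same]
      simp
    · rw [Matrix.mul_single_apply_of_ne _ _ _ _ _ hb]
      rw [Matrix.smul_apply, Matrix.single_apply_of_ne _ _ _ _ _ (by tauto), smul_zero,
        mul_zero]
  · rw [Matrix.single_mul_apply_of_ne _ _ _ _ _ ha]
    rw [Matrix.smul_apply, Matrix.single_apply_of_ne _ _ _ _ _ (by tauto), smul_zero]

end Aux

theorem stmt_5 {F : Type*} [Field F] {d : ℕ}
    (A : Matrix (Fin (d + 1)) (Fin (d + 1)) F)
    (htri : ∀ i j : Fin (d + 1), 1 < ((i : ℤ) - (j : ℤ)).natAbs → A i j = 0)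
    (hirr : ∀ i j : Fin (d + 1), ((i : ℤ) - (j : ℤ)).natAbs = 1 → A i j ≠ 0)
    (k : Fin (d + 1) → F)
    (hk : ∀ i : Fin (d + 1), k i =
      (∏ j ∈ Finset.univ.filter (fun j : Fin d => (j : ℕ) < (i : ℕ)), A j.castSucc j.succ) /
      (∏ j ∈ Finset.univ.filter (fun j : Fin d => (j : ℕ) < (i : ℕ)), A j.succ j.castSucc))
    (hknz : ∀ i, k i ≠ 0)
    (K : Matrix (Fin (d + 1)) (Fin (d + 1)) F) (hK : K = Matrix.diagonal k)
    (dag : Matrix (Fin (d + 1)) (Fin (d + 1)) F → Matrix (Fin (d + 1)) (Fin (d + 1)) F)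
    (hdag : ∀ X, dag X = K⁻¹ * X.transpose * K) :
    (∀ X Y, dag (X * Y) = dag Y * dag X) ∧
    (∀ (c : F) (X Y), dag (c • X + Y) = c • dag X + dag Y) ∧
    Function.Bijective dag ∧
    (∀ X, dag (dag X) = X) ∧
    dag A = A ∧
    (∀ i : Fin (d + 1), dag (Matrix.single i i 1) = Matrix.single i i 1) ∧
    (∀ ξ : Matrix (Fin (d + 1)) (Fin (d + 1)) F → Matrix (Fin (d + 1)) (Fin (d + 1)) F,
      (∀ X Y, ξ (X * Y) = ξ Y * ξ X) →
      (∀ (c : F) (X Y), ξ (c • X + Y) = c • ξ X + ξ Y) →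
      Function.Bijective ξ →
      ξ A = A →
      (∀ i : Fin (d + 1), ξ (Matrix.single i i 1) = Matrix.single i i 1) →
      ξ = dag) := by
  have hstep := aux_kstep A hirr k hk
  -- inverse of K
  have hKinv : K⁻¹ = Matrix.diagonal (fun i => (k i)⁻¹) := by
    apply Matrix.inv_eq_right_inv
    rw [hK, Matrix.diagonal_mul_diagonal, ← Matrix.diagonal_one]
    have h : (fun i => k i * (k i)⁻¹) = fun _ => (1:F) := funext fun i => mul_inv_cancel₀ (hknz i)
    rw [h]
  have hKK' : K * K⁻¹ = 1 := by
    rw [hKinv, hK, Matrix.diagonal_mul_diagonal, ← Matrix.diagonal_one]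
    have h : (fun i => k i * (k i)⁻¹) = fun _ => (1:F) := funext fun i => mul_inv_cancel₀ (hknz i)
    rw [h]
  have hK'K : K⁻¹ * K = 1 := by
    rw [hKinv, hK, Matrix.diagonal_mul_diagonal, ← Matrix.diagonal_one]
    have h : (fun i => (k i)⁻¹ * k i) = fun _ => (1:F) := funext fun i => inv_mul_cancel₀ (hknz i)
    rw [h]
  -- entry formula
  have hentry : ∀ (X : Matrix (Fin (d+1)) (Fin (d+1)) F) (i j : Fin (d+1)),
      dag X i j = (k i)⁻¹ * X j i * k j := by
    intro X i j
    rw [hdag, hKinv, hK]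
    simp [Matrix.mul_diagonal, Matrix.diagonal_mul]
  -- antihomomorphism
  have hanti : ∀ X Y, dag (X * Y) = dag Y * dag X := by
    intro X Y
    have h1 : ∀ Z : Matrix (Fin (d+1)) (Fin (d+1)) F, K * (K⁻¹ * Z) = Z := by
      intro Z; rw [← Matrix.mul_assoc, hKK', one_mul]
    simp only [hdag, Matrix.transpose_mul, Matrix.mul_assoc]
    rw [h1]
  -- linearity
  have hlin : ∀ (c : F) (X Y), dag (c • X + Y) = c • dag X + dag Y := by
    intro c X Y
    simp only [hdag, Matrix.transpose_add, Matrix.transpose_smul, Matrix.add_mul,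
      Matrix.mul_add, Matrix.smul_mul, Matrix.mul_smul]
  -- involution
  have hinv : ∀ X, dag (dag X) = X := by
    intro X
    ext i j
    rw [hentry, hentry]
    have h1 := hknz i
    have h2 := hknz j
    field_simp
  -- dag A = A
  have hdagA : dag A = A := by
    ext i j
    rw [hentry]
    rcases Nat.lt_trichotomy ((i:ℤ) - (j:ℤ)).natAbs 1 with h | h | h
    · -- natAbs = 0, so i = j
      have : i = j := by
        apply Fin.ext
        omega
      subst this
      field_simp
      rw [mul_div_cancel_left₀ _ (hknz i)]
    · -- adjacent
      rcases Nat.lt_or_ge (i : ℕ) (j : ℕ) with hij | hij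
      · -- j = i + 1
        have hd : (i : ℕ) < d := by omega
        have e1 : i = (⟨(i : ℕ), hd⟩ : Fin d).castSucc := by apply Fin.ext; simp
        have e2 : j = (⟨(i : ℕ), hd⟩ : Fin d).succ := by
          apply Fin.ext; simp [Fin.val_succ]; omega
        have hst' : k j * A j i = k i * A i j := by
          rw [e1, e2]; exact hstep _
        have hki := hknz i
        field_simp
        linear_combination hst'
      · -- i = j + 1
        have hd : (j : ℕ) < d := by omega
        have e1 : j = (⟨(j : ℕ), hd⟩ : Fin d).castSucc := by apply Fin.ext; simp
        have e2 : i = (⟨(j : ℕ), hd⟩ : Fin d).succ := by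
          apply Fin.ext; simp [Fin.val_succ]; omega
        have hst' : k i * A i j = k j * A j i := by
          rw [e1, e2]; exact hstep _
        have hki := hknz i
        field_simp
        linear_combination -hst'
    · -- far off diagonal: both zero
      have h1 : A i j = 0 := htri i j h
      have h2 : A j i = 0 := by
        apply htri
        omega
      rw [h1, h2]
      ring
  -- dag fixes the idempotents
  have hdagE : ∀ i j : Fin (d+1), dag (Matrix.single i j (1:F))
      = (k i * (k j)⁻¹) • Matrix.single j i 1 := by
    intro i j
    ext a b
    rw [hentry]
    by_cases ha : a = j
    · subst ha
      by_cases hb : b = i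
      · subst hb
        simp only [Matrix.single_apply_same, Matrix.smul_apply, smul_eq_mul, mul_one]
        ring
      · simp [Ne.symm hb, hb]
    · simp [Ne.symm ha, ha]
  have hdagEii : ∀ i : Fin (d + 1), dag (Matrix.single i i 1) = Matrix.single i i 1 := by
    intro i
    rw [hdagE]
    rw [mul_inv_cancel₀ (hknz i), one_smul]
  refine ⟨hanti, hlin, Function.Involutive.bijective hinv, hinv, hdagA, hdagEii, ?_⟩
  -- uniqueness
  intro ξ hmul hlinξ hbij hA hE
  have hz : ξ 0 = 0 := by
    have h := hlinξ 1 0 0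
    simp only [one_smul, add_zero] at h
    have h2 : ξ 0 + ξ 0 = ξ 0 + 0 := by rw [add_zero]; exact h.symm
    exact (add_left_cancel h2).symm ▸ rfl
  have hsmul : ∀ (c : F) X, ξ (c • X) = c • ξ X := by
    intro c X
    have := hlinξ c X 0
    simpa [hz] using this
  have hadd : ∀ X Y, ξ (X + Y) = ξ X + ξ Y := by
    intro X Y
    have := hlinξ 1 X Y
    simpa using this
  set E : Fin (d+1) → Fin (d+1) → Matrix (Fin (d+1)) (Fin (d+1)) F :=
    fun i j => Matrix.single i j (1:F) with hEdef
  have hEmul : ∀ i j l : Fin (d+1), E i j * E j l = E i l := by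
    intro i j l
    simp [hEdef]
  -- ξ maps E i j into the span of E j i
  have hxiE : ∀ i j : Fin (d+1), ξ (E i j) = (ξ (E i j) j i) • E j i := by
    intro i j
    have h0 : E i j = E i i * E i j * E j j := by
      rw [Matrix.mul_assoc, hEmul, hEmul]
    conv_lhs => rw [h0]
    rw [hmul, hmul, hE, hE, ← Matrix.mul_assoc]
    exact aux_sandwich (ξ (E i j)) j i
  set f : Fin (d+1) → Fin (d+1) → F := fun i j => ξ (E i j) j i with hfdef
  have hchain : ∀ i j l : Fin (d+1), f i l = f j l * f i j := by
    intro i j l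
    have h := congrArg ξ (hEmul i j l)
    rw [hmul] at h
    rw [hxiE i j, hxiE j l, hxiE i l] at h
    rw [Matrix.smul_mul, Matrix.mul_smul, hEmul] at h
    have h2 := congrFun (congrFun h l) i
    simpa [hEdef, hfdef] using h2.symm
  have hfii : ∀ i, f i i = 1 := by
    intro i
    show ξ (E i i) i i = 1
    rw [hE]
    simp [hEdef]
  -- adjacent values of f from ξ A = A
  have hadj : ∀ i : Fin d, f i.succ i.castSucc * A i.succ i.castSucc = A i.castSucc i.succ := by
    intro i
    have h0 : ξ (E i.succ i.succ * A * E i.castSucc i.castSucc)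
        = E i.castSucc i.castSucc * A * E i.succ i.succ := by
      rw [hmul, hmul, hE, hE, hA, ← Matrix.mul_assoc]
    rw [aux_sandwich A i.succ i.castSucc, aux_sandwich A i.castSucc i.succ] at h0
    rw [hsmul, hxiE] at h0
    rw [smul_smul] at h0
    have h2 := congrFun (congrFun h0 i.castSucc) i.succ
    simp only [Matrix.smul_apply, hEdef, Matrix.single_apply_same, smul_eq_mul,
      mul_one] at h2
    rw [mul_comm] at h2
    exact h2
  -- f i 0 * k 0 = k i by induction
  have hf0 : ∀ n : ℕ, ∀ i : Fin (d+1), (i : ℕ) = n → f i 0 * k 0 = k i := by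
    intro n
    induction n with
    | zero =>
      intro i hi
      have : i = 0 := by apply Fin.ext; simpa using hi
      subst this
      rw [hfii, one_mul]
    | succ m ih =>
      intro i hi
      have hd : m < d := by omega
      set i' : Fin d := ⟨m, hd⟩ with hi'
      have e1 : i = i'.succ := by apply Fin.ext; simp [hi', Fin.val_succ]; omega
      subst e1
      have hih : f i'.castSucc 0 * k 0 = k i'.castSucc := ih i'.castSucc (by simp [hi'])
      have hc : A i'.succ i'.castSucc ≠ 0 := by
        apply hirr; simp [Fin.val_succ, Fin.coe_castSucc]
      have hch : f i'.succ 0 = f i'.castSucc 0 * f i'.succ i'.castSucc :=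
        hchain i'.succ i'.castSucc 0
      have h1 := hadj i'
      have h2 := hstep i'
      field_simp at h1 ⊢
      have : f i'.succ 0 * k 0 * A i'.succ i'.castSucc
          = f i'.castSucc 0 * k 0 * (f i'.succ i'.castSucc * A i'.succ i'.castSucc) := by
        rw [hch]; ring
      rw [h1, hih] at this
      have h3 : f i'.succ 0 * k 0 * A i'.succ i'.castSucc = k i'.succ * A i'.succ i'.castSucc := by
        rw [this, ← h2]
      exact mul_right_cancel₀ hc h3
  have hfull : ∀ i j : Fin (d+1), f i j * k j = k i := by
    intro i j
    have h1 : f i 0 = f j 0 * f i j := hchain i j 0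
    have h2 := hf0 (i : ℕ) i rfl
    have h3 := hf0 (j : ℕ) j rfl
    have hk0 : k 0 ≠ 0 := hknz 0
    have : f i j * (f j 0 * k 0) = f i 0 * k 0 := by rw [h1]; ring
    rw [h2, h3] at this
    exact this
  -- conclude ξ = dag
  funext X
  let ξL : Matrix (Fin (d+1)) (Fin (d+1)) F →ₗ[F] Matrix (Fin (d+1)) (Fin (d+1)) F :=
    { toFun := ξ, map_add' := hadd, map_smul' := hsmul }
  let dagL : Matrix (Fin (d+1)) (Fin (d+1)) F →ₗ[F] Matrix (Fin (d+1)) (Fin (d+1)) F :=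
    { toFun := dag,
      map_add' := fun X Y => by
        have := hlin 1 X Y; simpa using this,
      map_smul' := fun c X => by
        have h0 : dag 0 = 0 := by
          have := hlin 1 0 0
          simp only [one_smul, add_zero] at this
          have h2 : dag 0 + dag 0 = dag 0 + 0 := by rw [add_zero]; exact this.symm
          exact (add_left_cancel h2).symm ▸ rfl
        have := hlin c X 0
        simpa [h0] using this }
  show ξL X = dagL X
  have hbasis : ∀ i j : Fin (d+1), ξL (E i j) = dagL (E i j) := by
    intro i j
    show ξ (E i j) = dag (E i j)
    rw [hxiE, hdagE]
    congr 1
    have hkj := hknz j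
    field_simp
    linear_combination hfull i j
  conv_lhs => rw [Matrix.matrix_eq_sum_single X]
  conv_rhs => rw [Matrix.matrix_eq_sum_single X]
  rw [map_sum, map_sum]
  apply Finset.sum_congr rfl
  intro i _
  rw [map_sum, map_sum]
  apply Finset.sum_congr rfl
  intro j _
  have hsb : Matrix.single i j (X i j) = X i j • E i j := by
    show Matrix.single i j (X i j) = X i j • Matrix.single i j 1
    rw [Matrix.smul_single, smul_eq_mul, mul_one]
  rw [hsb, map_smul, map_smul, hbasis]
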